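/- With D₁ and its poset P₁ of join-irreducible elements as above, define φ on P₁ by: if (c₁,…,c_k) is join-irreducible with unique index i satisfying c_i > a_i and c_i > c_{i-1}+1, set φ(c) = (p, q) = (u - c_i - (k - i), i - 1). Then for join-irreducible elements c, d with φ(c) = (p,q) and φ(d) = (p',q'), one has c ≤ d in D₁ if and only if p ≥ p' and q ≥ q'. -/

import Mathlib

/-- Membership in the distributive lattice `D₁` of strictly increasing `k`-tuples
`(c₁,…,c_k)` with `1 ≤ cᵢ ≤ u` and `cᵢ ≥ aᵢ`, ordered componentwise. -/
def memD1 {k : ℕ} (u : ℕ) (a c : Fin k → ℕ) : Prop :=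
  StrictMono c ∧ (∀ i, 1 ≤ c i) ∧ (∀ i, c i ≤ u) ∧ ∀ i, a i ≤ c i

/-- Join-irreducibility in `D₁`. -/
def joinIrredD1 {k : ℕ} (u : ℕ) (a c : Fin k → ℕ) : Prop :=
  memD1 u a c ∧ c ≠ a ∧
    ∀ d e : Fin k → ℕ, memD1 u a d → memD1 u a e → c = d ⊔ e → c = d ∨ c = e

/-- The condition singling out the unique index `i` of a join-irreducible element:
`cᵢ > aᵢ` and `cᵢ > c_{i-1} + 1` (deemed true when `i` is the first index). -/
def specialIdx {k : ℕ} (a c : Fin k → ℕ) (i : Fin k) : Prop :=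
  a i < c i ∧ ∀ j : Fin k, (j : ℕ) + 1 = (i : ℕ) → c j + 1 < c i

/-- Gap lemma: a strictly monotone sequence grows at least by one each step. -/
lemma gapD1 {k : ℕ} {c : Fin k → ℕ} (hc : StrictMono c) :
    ∀ n : ℕ, ∀ s t : Fin k, (t : ℕ) = (s : ℕ) + n → c s + n ≤ c t := by
  intro n
  induction n with
  | zero =>
    intro s t h
    have : s = t := Fin.ext (by omega)
    subst this; omega
  | succ n ih =>
    intro s t h
    have hlt : (s : ℕ) + n < k := by have := t.isLt; omega
    have h1 := ih s ⟨(s : ℕ) + n, hlt⟩ rfl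
    have h2 : c ⟨(s : ℕ) + n, hlt⟩ < c t := hc (by rw [Fin.lt_def]; exact (by simp; omega))
    omega

/-- Decrementing a join-irreducible tuple at a special index stays in `D₁`. -/
lemma memD1_dec {k u : ℕ} {a c : Fin k → ℕ} (hm : memD1 u a c) (ha1 : ∀ i, 1 ≤ a i)
    {t : Fin k} (ht : specialIdx a c t) :
    memD1 u a (fun s => if s = t then c t - 1 else c s) := by
  obtain ⟨hmono, hone, hu, hac⟩ := hm
  refine ⟨?_, ?_, ?_, ?_⟩
  · intro s1 s2 hlt
    dsimp only
    by_cases h1 : s1 = t <;> by_cases h2 : s2 = t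
    · exact absurd (h1.trans h2.symm) (ne_of_lt hlt)
    · rw [if_pos h1, if_neg h2]
      have hlt2 : c t < c s2 := hmono (h1 ▸ hlt)
      omega
    · rw [if_pos h2, if_neg h1]
      have htval : (s1 : ℕ) < (t : ℕ) := by
        have := hlt
        rw [Fin.lt_def] at this
        omega
      have htpos : 1 ≤ (t : ℕ) := by omega
      have hs0lt : (t : ℕ) - 1 < k := by have := t.isLt; omega
      have hv : ((⟨(t : ℕ) - 1, hs0lt⟩ : Fin k) : ℕ) = (t : ℕ) - 1 := rfl
      have hkey := ht.2 ⟨(t : ℕ) - 1, hs0lt⟩ (by rw [hv]; omega)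
      have hle : c s1 ≤ c ⟨(t : ℕ) - 1, hs0lt⟩ := by
        rcases eq_or_lt_of_le (show (s1 : ℕ) ≤ (t : ℕ) - 1 by omega) with heq | hl
        · have : s1 = ⟨(t : ℕ) - 1, hs0lt⟩ := Fin.ext (by rw [hv]; omega)
          rw [this]
        · exact le_of_lt (hmono (by rw [Fin.lt_def, hv]; omega))
      -- h2 : s2 = t used for the goal value computed at s2
      subst h2
      omega
    · rw [if_neg h1, if_neg h2]
      exact hmono hlt
  · intro s
    dsimp only
    by_cases h : s = t
    · rw [if_pos h]
      have := ht.1; have := ha1 t; omega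
    · rw [if_neg h]; exact hone s
  · intro s
    dsimp only
    by_cases h : s = t
    · rw [if_pos h]
      have := hu t; omega
    · rw [if_neg h]; exact hu s
  · intro s
    dsimp only
    by_cases h : s = t
    · rw [if_pos h]
      have h1 := ht.1
      subst h
      omega
    · rw [if_neg h]; exact hac s

/-- A join-irreducible element has a unique special index. -/
lemma special_unique {k u : ℕ} {a c : Fin k → ℕ} (hc : joinIrredD1 u a c)
    (ha1 : ∀ i, 1 ≤ a i) {t₁ t₂ : Fin k}
    (h1 : specialIdx a c t₁) (h2 : specialIdx a c t₂) : t₁ = t₂ := by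
  by_contra hne
  obtain ⟨hm, -, hirr⟩ := hc
  have hmd := memD1_dec hm ha1 h1
  have hme := memD1_dec hm ha1 h2
  have hc1 : 2 ≤ c t₁ := by have := h1.1; have := ha1 t₁; omega
  have hc2 : 2 ≤ c t₂ := by have := h2.1; have := ha1 t₂; omega
  have hsup : c = (fun s => if s = t₁ then c t₁ - 1 else c s) ⊔
      (fun s => if s = t₂ then c t₂ - 1 else c s) := by
    funext s
    simp only [Pi.sup_apply]
    rcases eq_or_ne s t₁ with h | h
    · subst h
      rw [if_pos rfl, if_neg hne]
      omega
    · rcases eq_or_ne s t₂ with h2 | h2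
      · subst h2
        rw [if_neg h, if_pos rfl]
        omega
      · rw [if_neg h, if_neg h2]
        omega
  rcases hirr _ _ hmd hme hsup with h | h
  · have := congrFun h t₁
    rw [if_pos rfl] at this
    omega
  · have := congrFun h t₂
    rw [if_pos rfl] at this
    omega

/-- Below the special index a join-irreducible tuple agrees with `a`. -/
lemma below_eq {k u : ℕ} {a c : Fin k → ℕ} (hc : joinIrredD1 u a c)
    (ha : StrictMono a) (ha1 : ∀ i, 1 ≤ a i) {i : Fin k} (hi : specialIdx a c i) :
    ∀ n : ℕ, ∀ t : Fin k, (t : ℕ) = n → (t : ℕ) < (i : ℕ) → c t = a t := by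
  intro n
  induction n with
  | zero =>
    intro t htn hti
    have hti' : t ≠ i := by intro h; subst h; omega
    have hac := hc.1.2.2.2 t
    by_contra hne
    have hat : a t < c t := by omega
    have hsp : specialIdx a c t := ⟨hat, fun s hs => by omega⟩
    exact hti' (special_unique hc ha1 hsp hi)
  | succ n ih =>
    intro t htn hti
    have hti' : t ≠ i := by intro h; subst h; omega
    have hac := hc.1.2.2.2 t
    by_contra hne
    have hat : a t < c t := by omega
    have hns : ¬ specialIdx a c t := fun hsp => hti' (special_unique hc ha1 hsp hi)
    unfold specialIdx at hns
    push_neg at hns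
    obtain ⟨s, hs1, hs2⟩ := hns hat
    have hcs : c s = a s := ih s (by omega) (by omega)
    have has : a s < a t := ha (show s < t by rw [Fin.lt_def]; omega)
    omega

/-- Non-special indices are "non-decrementable". -/
lemma not_special {k u : ℕ} {a c : Fin k → ℕ} (hc : joinIrredD1 u a c)
    (ha1 : ∀ i, 1 ≤ a i) {i t : Fin k} (hi : specialIdx a c i) (hne : t ≠ i) :
    c t ≤ a t ∨ ∃ s : Fin k, (s : ℕ) + 1 = (t : ℕ) ∧ c t ≤ c s + 1 := by
  by_contra h
  push_neg at h
  obtain ⟨h1, h2⟩ := h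
  have hsp : specialIdx a c t := ⟨by omega, fun s hs => by have := h2 s hs; omega⟩
  exact hne (special_unique hc ha1 hsp hi)

theorem le_iff_phi_ge {k u : ℕ} (a : Fin k → ℕ)
    (hk : 1 ≤ k) (hku : k ≤ u) (ha : StrictMono a) (ha1 : ∀ i, 1 ≤ a i)
    (hau : ∀ i : Fin k, a i + k ≤ u + (i : ℕ) + 1)
    (c d : Fin k → ℕ) (hc : joinIrredD1 u a c) (hd : joinIrredD1 u a d)
    (i j : Fin k) (hi : specialIdx a c i) (hj : specialIdx a d j)
    (p q p' q' : ℤ)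
    (hp : p = (u : ℤ) - c i - ((k : ℤ) - 1 - (i : ℕ))) (hq : q = (i : ℕ))
    (hp' : p' = (u : ℤ) - d j - ((k : ℤ) - 1 - (j : ℕ))) (hq' : q' = (j : ℕ)) :
    c ≤ d ↔ p' ≤ p ∧ q' ≤ q := by
  subst hp hq hp' hq'
  have hcmono := hc.1.1
  have hdmono := hd.1.1
  have hcad : ∀ t, a t ≤ c t := hc.1.2.2.2
  have hdad : ∀ t, a t ≤ d t := hd.1.2.2.2
  have hik := i.isLt
  have hjk := j.isLt
  constructor
  · intro hle
    -- first: j ≤ i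
    have hji : (j : ℕ) ≤ (i : ℕ) := by
      by_contra hcon
      have hdi : d i = a i := below_eq hd ha ha1 hj (i : ℕ) i rfl (by omega)
      have h1 : c i ≤ d i := hle i
      have h2 := hi.1
      omega
    -- key inequality by downward induction
    have key : ∀ n : ℕ, ∀ t : Fin k, (t : ℕ) + n = (i : ℕ) → (j : ℕ) ≤ (t : ℕ) →
        c i + (t : ℕ) ≤ d t + (i : ℕ) := by
      intro n
      induction n with
      | zero =>
        intro t ht _
        have : t = i := Fin.ext (by omega)
        subst this
        have h0 : c t ≤ d t := hle t
        omega
      | succ n ih =>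
        intro t ht hjt
        have ht1 : (t : ℕ) + 1 < k := by omega
        have hv : ((⟨(t : ℕ) + 1, ht1⟩ : Fin k) : ℕ) = (t : ℕ) + 1 := rfl
        have hIH := ih ⟨(t : ℕ) + 1, ht1⟩ (by rw [hv]; omega) (by rw [hv]; omega)
        have ht'j : (⟨(t : ℕ) + 1, ht1⟩ : Fin k) ≠ j := by
          intro h
          have : (t : ℕ) + 1 = (j : ℕ) := by rw [← h]
          omega
        rcases not_special hd ha1 hj ht'j with hcase | ⟨s, hs1, hs2⟩
        · -- d t' = a t' leads to contradiction
          have hda := hdad ⟨(t : ℕ) + 1, ht1⟩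
          have hca := hcad ⟨(t : ℕ) + 1, ht1⟩
          have hgap : c ⟨(t : ℕ) + 1, ht1⟩ + ((i : ℕ) - ((t : ℕ) + 1)) ≤ c i :=
            gapD1 hcmono _ ⟨(t : ℕ) + 1, ht1⟩ i (by rw [hv]; omega)
          by_cases hti : (t : ℕ) + 1 = (i : ℕ)
          · -- t' = i : c i ≤ a i, contradiction
            have heq : (⟨(t : ℕ) + 1, ht1⟩ : Fin k) = i := Fin.ext (by rw [hv]; omega)
            rw [heq] at hcase hda hIH
            have := hi.1
            omega
          · -- t' < i : use the step c (i-1) + 1 < c i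
            have hs0lt : (i : ℕ) - 1 < k := by omega
            have hv0 : ((⟨(i : ℕ) - 1, hs0lt⟩ : Fin k) : ℕ) = (i : ℕ) - 1 := rfl
            have hstep := hi.2 ⟨(i : ℕ) - 1, hs0lt⟩ (by rw [hv0]; omega)
            have hgap2 : c ⟨(t : ℕ) + 1, ht1⟩ + (((i : ℕ) - 1) - ((t : ℕ) + 1)) ≤
                c ⟨(i : ℕ) - 1, hs0lt⟩ :=
              gapD1 hcmono _ ⟨(t : ℕ) + 1, ht1⟩ ⟨(i : ℕ) - 1, hs0lt⟩ (by rw [hv0, hv]; omega)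
            omega
        · have hst : s = t := Fin.ext (by rw [hv] at hs1; omega)
          subst hst
          omega
    have hkey := key ((i : ℕ) - (j : ℕ)) j (by omega) le_rfl
    have hdju := hd.1.2.2.1 j
    have hciu := hc.1.2.2.1 i
    constructor
    · push_cast
      omega
    · push_cast
      omega
  · rintro ⟨hpq, hq⟩
    have hji : (j : ℕ) ≤ (i : ℕ) := by exact_mod_cast hq
    have hkey : c i + (j : ℕ) ≤ d j + (i : ℕ) := by
      have := hd.1.2.2.1 j
      have := hc.1.2.2.1 i
      omega
    -- upward induction for t ≥ i
    have up : ∀ n : ℕ, ∀ t : Fin k, (t : ℕ) = (i : ℕ) + n → c t ≤ d t := by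
      intro n
      induction n with
      | zero =>
        intro t htn
        have : t = i := Fin.ext (by omega)
        subst this
        have hgap : d j + ((t : ℕ) - (j : ℕ)) ≤ d t :=
          gapD1 hdmono _ j t (by omega)
        omega
      | succ n ih =>
        intro t htn
        have hti : t ≠ i := by
          intro h
          have : (t : ℕ) = (i : ℕ) := by rw [h]
          omega
        rcases not_special hc ha1 hi hti with hcase | ⟨s, hs1, hs2⟩
        · have := hdad t
          omega
        · have hIH := ih s (by omega)
          have hds : d s < d t := hdmono (show s < t by rw [Fin.lt_def]; omega)
          omega
    intro t
    show c t ≤ d t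
    by_cases htlt : (t : ℕ) < (i : ℕ)
    · have hct : c t = a t := below_eq hc ha ha1 hi (t : ℕ) t rfl htlt
      have := hdad t
      omega
    · exact up ((t : ℕ) - (i : ℕ)) t (by omega)
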